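/- Let X be a set, T > 0, K ≥ 0, and for each r ∈ (0, √T] let d_r be a pseudometric on X satisfying the distortion property d_ρ(x,y) ≤ d_r(x,y) + K(ρ − r) for all 0 < r ≤ ρ ≤ √T and all x, y ∈ X. Define D_R(x,y) = inf{ r ∈ (0, √T] : d_r(x,y) < rR } (with D_R(x,y) = +∞ if no such r exists). Then for all K < R₁ ≤ R₂ and all x, y ∈ X: (i) D_{R₂}(x,y) ≤ D_{R₁}(x,y); and (ii) if ((R₂ − K)/(R₁ − K))·D_{R₂}(x,y) < √T, then D_{R₁}(x,y) ≤ ((R₂ − K)/(R₁ − K))·D_{R₂}(x,y). -/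

import Mathlib

open scoped ENNReal

/-- The `R`-scale distance associated with a family of pseudometrics `d r`,
`r ∈ (0, √T]`: `D_R(x,y) = inf { r ∈ (0, √T] : d_r(x,y) < rR }`, with value `∞`
if no such `r` exists. -/
noncomputable def scaleDist {X : Type*} (d : ℝ → X → X → ℝ) (T R : ℝ)
    (x y : X) : ℝ≥0∞ :=
  sInf {e : ℝ≥0∞ | ∃ r : ℝ, 0 < r ∧ r ≤ Real.sqrt T ∧ d r x y < r * R ∧
    e = ENNReal.ofReal r}

/-- Comparison of `R`-scale distances for different `R`: for `K < R₁ ≤ R₂`,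
`D_{R₂}(x,y) ≤ D_{R₁}(x,y)`, and if `((R₂−K)/(R₁−K))·D_{R₂}(x,y) < √T` then
`D_{R₁}(x,y) ≤ ((R₂−K)/(R₁−K))·D_{R₂}(x,y)`. -/
theorem scaleDist_monotone_compare {X : Type*} (d : ℝ → X → X → ℝ)
    (T K : ℝ) (hT : 0 < T) (hK : 0 ≤ K)
    (hnonneg : ∀ r, 0 < r → r ≤ Real.sqrt T → ∀ x y, 0 ≤ d r x y)
    (hsymm : ∀ r, 0 < r → r ≤ Real.sqrt T → ∀ x y, d r x y = d r y x)
    (hself : ∀ r, 0 < r → r ≤ Real.sqrt T → ∀ x, d r x x = 0)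
    (htri : ∀ r, 0 < r → r ≤ Real.sqrt T → ∀ x y z,
      d r x y ≤ d r x z + d r z y)
    (hdistort : ∀ r ρ, 0 < r → r ≤ ρ → ρ ≤ Real.sqrt T → ∀ x y,
      d ρ x y ≤ d r x y + K * (ρ - r)) :
    ∀ R₁ R₂ : ℝ, K < R₁ → R₁ ≤ R₂ → ∀ x y : X,
      scaleDist d T R₂ x y ≤ scaleDist d T R₁ x y ∧
      (ENNReal.ofReal ((R₂ - K) / (R₁ - K)) * scaleDist d T R₂ x y <
          ENNReal.ofReal (Real.sqrt T) →
        scaleDist d T R₁ x y ≤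
          ENNReal.ofReal ((R₂ - K) / (R₁ - K)) * scaleDist d T R₂ x y) := by

  intro R₁ R₂ hR₁ hR₁₂ x y
  have hK1 : 0 < R₁ - K := sub_pos.mpr hR₁
  set c := (R₂ - K) / (R₁ - K) with hc
  have hc1 : 1 ≤ c := (one_le_div hK1).mpr (by linarith)
  have hc0 : 0 < c := lt_of_lt_of_le one_pos hc1
  set C := ENNReal.ofReal c with hC
  have hC0 : C ≠ 0 := by
    simp [hC, ENNReal.ofReal_eq_zero, not_le, hc0]
  have hCt : C ≠ ∞ := ENNReal.ofReal_ne_top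
  constructor
  · apply sInf_le_sInf
    rintro e ⟨r, hr0, hrT, hd, he⟩
    exact ⟨r, hr0, hrT, hd.trans_le (by nlinarith), he⟩
  · intro hlt
    have key : ∀ b, C * scaleDist d T R₂ x y < b →
        b < ENNReal.ofReal (Real.sqrt T) → scaleDist d T R₁ x y ≤ b := by
      intro b hb hbT
      have h2 : scaleDist d T R₂ x y < b / C := by
        rw [ENNReal.lt_div_iff_mul_lt (Or.inl hC0) (Or.inl hCt), mul_comm]
        exact hb
      obtain ⟨e, ⟨r, hr0, hrT, hd2, he⟩, helt⟩ := sInf_lt_iff.mp h2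
      have hCe : C * e < b := by
        calc C * e < C * (b / C) := (ENNReal.mul_lt_mul_iff_right hC0 hCt).mpr helt
        _ = b := ENNReal.mul_div_cancel hC0 hCt
      have hce : C * e = ENNReal.ofReal (c * r) := by
        rw [he, ← ENNReal.ofReal_mul hc0.le]
      have hcrT : c * r < Real.sqrt T := by
        have h3 := hCe.trans hbT
        rw [hce] at h3
        exact (ENNReal.ofReal_lt_ofReal_iff_of_nonneg (by positivity)).mp h3
      have hrρ : r ≤ c * r := le_mul_of_one_le_left hr0.le hc1
      have hdρ : d (c * r) x y < (c * r) * R₁ := by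
        have h1 := hdistort r (c * r) hr0 hrρ hcrT.le x y
        have h4 : c * (R₁ - K) = R₂ - K := div_mul_cancel₀ _ hK1.ne'
        nlinarith
      refine le_trans (sInf_le ⟨c * r, by positivity, hcrT.le, hdρ, rfl⟩) ?_
      rw [← hce]
      exact hCe.le
    refine le_of_forall_gt_imp_ge_of_dense ?_
    intro b hb
    obtain ⟨b', hb1, hb2⟩ := exists_between (lt_min hb hlt)
    exact (key b' hb1 (hb2.trans_le (min_le_right _ _))).trans
      (hb2.le.trans (min_le_left _ _))
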